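/- For every z* ∈ P(k0) and all z0, z1 ∈ T(z*) with z0 ≤ z1: | ∑_{z ∈ T(z*), z0 ≤ z ≤ z1} ( S(H_z)·r(z)/g(z) − cn_{z*}(z)·r(z) ) | < r(z*). -/

import Mathlib

open scoped Classical
open Finset MeasureTheory

namespace BSHM

noncomputable section

/-- The set of candidate parents of machine type `i`: types `j ∈ M` with `j > i`
and a strictly smaller normalized cost rate per capacity unit. -/
def pset (m : ℕ) (g r : ℕ → ℝ) (i : ℕ) : Set ℕ :=
  {j | j ≤ m ∧ i < j ∧ r j / g j < r i / g i}

/-- The parent `p i` of machine type `i` (equal to `0` when the parent is undefined,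
since any actual parent has index `≥ 2`). -/
def p (m : ℕ) (g r : ℕ → ℝ) (i : ℕ) : ℕ := sInf (pset m g r i)

/-- `pdef i` asserts that the parent of `i` is defined. -/
def pdef (m : ℕ) (g r : ℕ → ℝ) (i : ℕ) : Prop := (pset m g r i).Nonempty

/-- One step of the parent relation: `b` is the (defined) parent of `a`. -/
def pstep (m : ℕ) (g r : ℕ → ℝ) (a b : ℕ) : Prop :=
  pdef m g r a ∧ b = p m g r a

/-- `P i`: the set consisting of `i` together with all of its iterated parents. -/
def P (m : ℕ) (g r : ℕ → ℝ) (i : ℕ) : Set ℕ :=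
  {z | Relation.ReflTransGen (pstep m g r) i z}

/-- `A i`: the set of nodes in the tree rooted at `i`,
i.e. all `z ∈ M` having `i` as an ancestor (or equal to `i`). -/
def A (m : ℕ) (g r : ℕ → ℝ) (i : ℕ) : Set ℕ :=
  {z | 1 ≤ z ∧ z ≤ m ∧ i ∈ P m g r z}

/-- `v i`: the lowest-indexed node in the tree rooted at `i`. -/
def v (m : ℕ) (g r : ℕ → ℝ) (i : ℕ) : ℕ := sInf (A m g r i)

/-- `y i`: the younger siblings of `i` (same parent status, smaller index). -/
def y (m : ℕ) (g r : ℕ → ℝ) (i : ℕ) : Set ℕ :=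
  {z | 1 ≤ z ∧ z ≤ m ∧ z < i ∧ p m g r z = p m g r i}

/-- `esib i`: the elder siblings of `i`. -/
def esib (m : ℕ) (g r : ℕ → ℝ) (i : ℕ) : Set ℕ :=
  {z | 1 ≤ z ∧ z ≤ m ∧ i < z ∧ p m g r z = p m g r i}

/-- `T k := {k} ∪ ⋃_{z ∈ P(k)} y(z)`. -/
def T (m : ℕ) (g r : ℕ → ℝ) (k : ℕ) : Set ℕ :=
  {k} ∪ ⋃ z ∈ P m g r k, y m g r z

/-- `T k` as a `Finset` (all relevant nodes lie in `{k} ∪ [1, m]`). -/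
def TIcc (m : ℕ) (g r : ℕ → ℝ) (k : ℕ) : Finset ℕ :=
  (insert k (Finset.Icc 1 m)).filter (fun z => z ∈ T m g r k)

/-! ### Jobs and one-shot scheduling -/

variable {ι : Type*}

/-- The exact machine type of a job `J`: the least `z ∈ M` with `s J ≤ g z`. -/
def mty (m : ℕ) (g : ℕ → ℝ) (s : ι → ℝ) (J : ι) : ℕ :=
  sInf {z | 1 ≤ z ∧ z ≤ m ∧ s J ≤ g z}

/-- Total size of a finite set of jobs. -/
def Ssum (s : ι → ℝ) (W : Finset ι) : ℝ := ∑ J ∈ W, s J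

/-- `k0f X`: the highest-indexed exact machine type among the jobs of `X`. -/
def k0f (m : ℕ) (g : ℕ → ℝ) (s : ι → ℝ) (X : Finset ι) : ℕ :=
  X.sup (fun J => mty m g s J)

/-- `H z X`: the jobs of `X` whose exact machine type lies in the tree rooted at `z`. -/
def H (m : ℕ) (g r : ℕ → ℝ) (s : ι → ℝ) (z : ℕ) (X : Finset ι) : Finset ι :=
  X.filter (fun J => mty m g s J ∈ A m g r z)

/-- `SH X z := S(H_z(X))`. -/
def SH (m : ℕ) (g r : ℕ → ℝ) (s : ι → ℝ) (X : Finset ι) (z : ℕ) : ℝ :=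
  Ssum s (H m g r s z X)

/-- Feasibility of a machine configuration `w : M → ℕ` for the job set `X`. -/
def Feasible (m : ℕ) (g : ℕ → ℝ) (s : ι → ℝ) (X : Finset ι) (w : ℕ → ℕ) : Prop :=
  ∀ i, 1 ≤ i → i ≤ m →
    Ssum s (X.filter (fun J => i ≤ mty m g s J)) ≤ ∑ z ∈ Finset.Icc i m, (w z : ℝ) * g z

/-- The cost of a machine configuration. -/
def cost (m : ℕ) (r : ℕ → ℝ) (w : ℕ → ℕ) : ℝ :=
  ∑ z ∈ Finset.Icc 1 m, (w z : ℝ) * r z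

/-- The optimal one-shot scheduling cost for a job set `X`. -/
def OPT1 (m : ℕ) (g r : ℕ → ℝ) (s : ι → ℝ) (X : Finset ι) : ℝ :=
  sInf {c : ℝ | ∃ w : ℕ → ℕ, Feasible m g s X w ∧ c = cost m r w}

/-- The fractional machine configuration `cn_{z*}` for the job set `X`, with
highest-indexed machine type `zs`.  A node `i ∈ T(zs) \ {zs}` is the boundary
type `i*` exactly when `∑_{z ∈ T(zs), z > i} S(H_z) ≤ cn(zs)·g(zs) <
∑_{z ∈ T(zs), z ≥ i} S(H_z)`; nodes above the boundary get `0`,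
nodes below it get `S(H_i)/g_i`. -/
def cn (m : ℕ) (g r : ℕ → ℝ) (s : ι → ℝ) (X : Finset ι) (zs i : ℕ) : ℝ :=
  let B : ℝ := (⌈SH m g r s X zs / g zs⌉₊ : ℝ) * g zs
  let Sge : ℝ := ∑ z ∈ (TIcc m g r zs).filter (fun z => i ≤ z), SH m g r s X z
  let Sgt : ℝ := ∑ z ∈ (TIcc m g r zs).filter (fun z => i < z), SH m g r s X z
  if i = zs then (⌈SH m g r s X zs / g zs⌉₊ : ℝ)
  else if i ∈ T m g r zs then
    (if Sgt ≤ B ∧ B < Sge then (Sge - B) / g i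
     else if B < Sgt then SH m g r s X i / g i
     else 0)
  else 0

/-- `cn_{zs}` is decent: for every strict ancestor `zt` of `zs`, the total cost of
the machines of types in `T(zs) ∩ A(zt)` is at most the cost of one type-`zt` machine. -/
def decent (m : ℕ) (g r : ℕ → ℝ) (s : ι → ℝ) (X : Finset ι) (zs : ℕ) : Prop :=
  ∀ zt ∈ P m g r zs, zt ≠ zs →
    (∑ z ∈ (TIcc m g r zs).filter (fun z => z ∈ A m g r zt), cn m g r s X zs z * r z) ≤ r zt

/-- `z⋄(X)`: the least `z* ∈ P(k0(X))` such that `cn_{z*}` is decent. -/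
def zdia (m : ℕ) (g r : ℕ → ℝ) (s : ι → ℝ) (X : Finset ι) : ℕ :=
  sInf {zs | zs ∈ P m g r (k0f m g s X) ∧ decent m g r s X zs}

/-- The child of `zd` whose subtree contains node `k`. -/
def chil (m : ℕ) (g r : ℕ → ℝ) (zd k : ℕ) : ℕ :=
  sInf {i | p m g r i = zd ∧ k ∈ A m g r i}

/-- The node `i ∈ T(zd)` whose subtree contains node `k`. -/
def idxT (m : ℕ) (g r : ℕ → ℝ) (zd k : ℕ) : ℕ :=
  sInf {i | i ∈ T m g r zd ∧ k ∈ A m g r i}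

/-- The children `f(zd)` of node `zd`, as a `Finset`. -/
def fchFin (m : ℕ) (g r : ℕ → ℝ) (zd : ℕ) : Finset ℕ :=
  (Finset.Icc 1 m).filter (fun z => p m g r z = zd)

/-- The cost `r̃(X)(J)` charged to the job `J` of the job set `X`. -/
def charge (m : ℕ) (g r : ℕ → ℝ) (s : ι → ℝ) (X : Finset ι) (J : ι) : ℝ :=
  let zd := zdia m g r s X
  let ρ : ℕ → ℝ := fun i => r i / g i
  let Hh := X.filter (fun J' => mty m g s J' = zd)
  let c : ℝ := Ssum s Hh * ρ zd + ∑ i ∈ fchFin m g r zd, SH m g r s X i * ρ i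
  if mty m g s J ∈ A m g r zd then
    if g zd ≤ SH m g r s X zd then s J * ρ zd
    else if r zd < c then
      if mty m g s J = zd then s J * ρ zd
      else
        s J * (ρ (chil m g r zd (mty m g s J)) -
          (ρ (chil m g r zd (mty m g s J)) - ρ zd) *
            ((c - r zd) /
              (∑ i ∈ fchFin m g r zd, ∑ J' ∈ H m g r s i X, s J' * (ρ i - ρ zd))))
    else
      if mty m g s J = zd then s J * ρ zd * (1 + (r zd - c) / (Ssum s Hh * ρ zd))
      else s J * ρ (chil m g r zd (mty m g s J))
  else s J * ρ (idxT m g r zd (mty m g s J))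

end

end BSHM

namespace BSHM

section AuxLemmas

variable {m : ℕ} {g r : ℕ → ℝ}

lemma p_mem_pset {i : ℕ} (h : pdef m g r i) : p m g r i ∈ pset m g r i :=
  Nat.sInf_mem h

lemma pstep_lt {a b : ℕ} (h : pstep m g r a b) : a < b := by
  obtain ⟨hd, rfl⟩ := h
  exact (p_mem_pset hd).2.1

lemma pstep_le_m {a b : ℕ} (h : pstep m g r a b) : b ≤ m := by
  obtain ⟨hd, rfl⟩ := h
  exact (p_mem_pset hd).1

lemma pstep_rho {a b : ℕ} (h : pstep m g r a b) : r b / g b < r a / g a := by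
  obtain ⟨hd, rfl⟩ := h
  exact (p_mem_pset hd).2.2

lemma P_ge {x z : ℕ} (h : z ∈ P m g r x) : x ≤ z := by
  have h' : Relation.ReflTransGen (pstep m g r) x z := h
  clear h
  induction h' with
  | refl => exact le_rfl
  | tail _ hstep ih => exact ih.trans (pstep_lt hstep).le

lemma P_le_m {x z : ℕ} (hx : x ≤ m) (h : z ∈ P m g r x) : z ≤ m := by
  have h' : Relation.ReflTransGen (pstep m g r) x z := h
  clear h
  induction h' with
  | refl => exact hx
  | tail _ hstep _ => exact pstep_le_m hstep

lemma P_rho {x z : ℕ} (h : z ∈ P m g r x) : r z / g z ≤ r x / g x := by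
  have h' : Relation.ReflTransGen (pstep m g r) x z := h
  clear h
  induction h' with
  | refl => exact le_rfl
  | tail _ hstep ih => exact ((pstep_rho hstep).le).trans ih

lemma cross_aux : ∀ n a x, 1 ≤ a → pdef m g r a → a ≤ x → x < p m g r a →
    p m g r a - x ≤ n → p m g r a ∈ P m g r x := by
  intro n
  induction n with
  | zero => intro a x _ _ _ hlt hle; omega
  | succ n ih =>
    intro a x ha hd hax hxb hle
    rcases eq_or_lt_of_le hax with rfl | hax'
    · exact Relation.ReflTransGen.single ⟨hd, rfl⟩
    · have hxm : x ≤ m := le_trans hxb.le (p_mem_pset hd).1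
      have hx_not : x ∉ pset m g r a := Nat.notMem_of_lt_sInf hxb
      have hrhoxa : r a / g a ≤ r x / g x := by
        by_contra hc
        push_neg at hc
        exact hx_not ⟨hxm, hax', hc⟩
      have hbx : p m g r a ∈ pset m g r x :=
        ⟨(p_mem_pset hd).1, hxb, lt_of_lt_of_le (pstep_rho ⟨hd, rfl⟩) hrhoxa⟩
      have hdx : pdef m g r x := ⟨_, hbx⟩
      have hpx_le : p m g r x ≤ p m g r a := Nat.sInf_le hbx
      have hpx_gt : x < p m g r x := (p_mem_pset hdx).2.1
      rcases eq_or_lt_of_le hpx_le with heq | hlt'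
      · have : p m g r x ∈ P m g r x := Relation.ReflTransGen.single ⟨hdx, rfl⟩
        rwa [heq] at this
      · have hrec : p m g r a ∈ P m g r (p m g r x) :=
          ih a (p m g r x) ha hd (by omega) hlt' (by omega)
        exact Relation.ReflTransGen.head ⟨hdx, rfl⟩ hrec

lemma ascend_aux : ∀ n w z zs, 1 ≤ w → w ≤ zs → zs ≤ m → zs < z →
    z ∈ P m g r w → zs - w ≤ n → z ∈ P m g r zs := by
  intro n
  induction n with
  | zero =>
    intro w z zs _ hwzs _ _ hz hle
    have hwz : w = zs := by omega
    rwa [hwz] at hz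
  | succ n ih =>
    intro w z zs hw hwzs hzsm hzsz hz hle
    rcases eq_or_lt_of_le hwzs with rfl | hlt
    · exact hz
    · have hz' : Relation.ReflTransGen (pstep m g r) w z := hz
      rcases Relation.ReflTransGen.cases_head hz' with heq | ⟨b, hstep, htail⟩
      · omega
      · have hwb : w < b := pstep_lt hstep
        rcases le_or_gt b zs with hble | hbgt
        · exact ih b z zs (by omega) hble hzsm hzsz htail (by omega)
        · have hcross : b ∈ P m g r zs := by
            have hb : b = p m g r w := hstep.2
            rw [hb] at hbgt ⊢
            exact cross_aux (p m g r w - zs) w zs hw hstep.1 hwzs hbgt le_rfl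
          exact Relation.ReflTransGen.trans hcross htail

lemma pstep_right_unique : Relator.RightUnique (pstep m g r) := by
  intro a b c hb hc
  rw [hb.2, hc.2]

lemma not_mem_T_gt {zs z : ℕ} (hzs : zs ≤ m) (hT : z ∈ T m g r zs) (hgt : zs < z)
    (hP : z ∈ P m g r zs) : False := by
  simp only [T, Set.mem_union, Set.mem_singleton_iff, Set.mem_iUnion] at hT
  rcases hT with rfl | ⟨zt, hzt, hy⟩
  · omega
  · simp only [y, Set.mem_setOf_eq] at hy
    obtain ⟨hz1, hzm, hzlt, hpz⟩ := hy
    have hPz : Relation.ReflTransGen (pstep m g r) zs z := hP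
    have hPzt : Relation.ReflTransGen (pstep m g r) zs zt := hzt
    rcases Relation.ReflTransGen.total_of_right_unique pstep_right_unique hPz hPzt
      with h | h
    · rcases Relation.ReflTransGen.cases_head h with heq | ⟨b, hstep, htail⟩
      · omega
      · have hdz : pdef m g r z := hstep.1
        have hb : b = p m g r z := hstep.2
        have h2 : z < p m g r z := (p_mem_pset hdz).2.1
        have hdzt : pdef m g r zt := by
          rw [pdef, Set.nonempty_iff_ne_empty]
          intro hce
          have h0 : p m g r zt = 0 := by rw [p, hce, Nat.sInf_empty]
          omega
        have h3 : zt < p m g r zt := (p_mem_pset hdzt).2.1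
        have h4 : b ≤ zt := P_ge htail
        omega
    · have := P_ge (h : z ∈ P m g r zt)
      omega

lemma rho_le_of_mem_T {zs z : ℕ} (hzs : zs ≤ m) (hT : z ∈ T m g r zs) :
    r z / g z ≤ r zs / g zs := by
  simp only [T, Set.mem_union, Set.mem_singleton_iff, Set.mem_iUnion] at hT
  rcases hT with rfl | ⟨zt, hzt, hy⟩
  · exact le_rfl
  · simp only [y, Set.mem_setOf_eq] at hy
    obtain ⟨hz1, hzm, hzlt, hpz⟩ := hy
    have hztm : zt ≤ m := P_le_m hzs hzt
    have h1 : r z / g z ≤ r zt / g zt := by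
      by_contra hc
      push_neg at hc
      have hmem : zt ∈ pset m g r z := ⟨hztm, hzlt, hc⟩
      have hdz : pdef m g r z := ⟨_, hmem⟩
      have hple : p m g r z ≤ zt := Nat.sInf_le hmem
      have h2 : z < p m g r z := (p_mem_pset hdz).2.1
      have hdzt : pdef m g r zt := by
        rw [pdef, Set.nonempty_iff_ne_empty]
        intro hce
        have h0 : p m g r zt = 0 := by rw [p, hce, Nat.sInf_empty]
        omega
      have h3 : zt < p m g r zt := (p_mem_pset hdzt).2.1
      omega
    exact h1.trans (P_rho hzt)

lemma telescope_min (φ : ℝ → ℝ) (c : ℕ → ℝ) (A : Finset ℕ) :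
    ∑ i ∈ A, (φ (∑ z ∈ A.filter (fun z => i ≤ z), c z)
      - φ (∑ z ∈ A.filter (fun z => i < z), c z))
      = φ (∑ z ∈ A, c z) - φ 0 := by
  classical
  induction A using Finset.induction_on_min with
  | empty => simp
  | insert a s hlt ih =>
    have ha : a ∉ s := fun h => lt_irrefl a (hlt a h)
    rw [Finset.sum_insert ha]
    have e1 : (insert a s).filter (fun z => a ≤ z) = insert a s := by
      apply Finset.filter_true_of_mem
      intro x hx
      rcases Finset.mem_insert.mp hx with rfl | hx
      · exact le_rfl
      · exact (hlt x hx).le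
    have e2 : (insert a s).filter (fun z => a < z) = s := by
      rw [Finset.filter_insert, if_neg (lt_irrefl a)]
      exact Finset.filter_true_of_mem fun x hx => hlt x hx
    have hcong : ∑ i ∈ s, (φ (∑ z ∈ (insert a s).filter (fun z => i ≤ z), c z)
        - φ (∑ z ∈ (insert a s).filter (fun z => i < z), c z))
        = ∑ i ∈ s, (φ (∑ z ∈ s.filter (fun z => i ≤ z), c z)
        - φ (∑ z ∈ s.filter (fun z => i < z), c z)) := by
      apply Finset.sum_congr rfl
      intro i hi
      rw [Finset.filter_insert, if_neg (by have := hlt i hi; omega),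
        Finset.filter_insert, if_neg (by have := hlt i hi; omega)]
    rw [e1, e2, hcong, ih]
    ring

lemma min_decomp {B c t : ℝ} (hc : 0 ≤ c) :
    min c (max 0 (B - t)) = min B (t + c) - min B t := by
  rcases le_total B t with h | h
  · rw [min_eq_left h, min_eq_left (by linarith : B ≤ t + c),
      max_eq_left (by linarith : B - t ≤ 0), min_eq_right hc]
    ring
  · rcases le_total B (t + c) with h' | h'
    · rw [min_eq_right h, min_eq_left h', max_eq_right (by linarith : (0:ℝ) ≤ B - t),
        min_eq_right (by linarith : B - t ≤ c)]
    · rw [min_eq_right h, min_eq_right h', max_eq_right (by linarith : (0:ℝ) ≤ B - t),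
        min_eq_left (by linarith : c ≤ B - t)]
      ring

lemma sge_decomp (c : ℕ → ℝ) {A : Finset ℕ} {i : ℕ} (hi : i ∈ A) :
    ∑ z ∈ A.filter (fun z => i ≤ z), c z = c i + ∑ z ∈ A.filter (fun z => i < z), c z := by
  classical
  have hins : A.filter (fun z => i ≤ z) = insert i (A.filter (fun z => i < z)) := by
    ext w
    simp only [Finset.mem_filter, Finset.mem_insert]
    constructor
    · rintro ⟨hw, hle⟩
      rcases eq_or_lt_of_le hle with rfl | hlt
      · exact Or.inl rfl
      · exact Or.inr ⟨hw, hlt⟩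
    · rintro (rfl | ⟨hw, hlt⟩)
      · exact ⟨hi, le_rfl⟩
      · exact ⟨hw, hlt.le⟩
  rw [hins, Finset.sum_insert (by simp)]

lemma min_decomp' {B c t : ℝ} (hc : 0 ≤ c) :
    min c (max 0 (B - t)) = min B (c + t) - min B t := by
  rw [min_decomp hc, add_comm c t]

lemma term_formula {ι : Type*} {m : ℕ} {g r : ℕ → ℝ} (s : ι → ℝ) (X : Finset ι) {zs i : ℕ}
    (hTT : i ∈ T m g r zs) (hne : i ≠ zs) (hgi : g i ≠ 0)
    (hSH : 0 ≤ SH m g r s X i) (hi : i ∈ TIcc m g r zs) :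
    SH m g r s X i * (r i / g i) - cn m g r s X zs i * r i
      = min (SH m g r s X i)
          (max 0 ((⌈SH m g r s X zs / g zs⌉₊ : ℝ) * g zs
            - ∑ z ∈ (TIcc m g r zs).filter (fun z => i < z), SH m g r s X z)) * (r i / g i) := by
  have hdec := sge_decomp (fun z => SH m g r s X z) hi
  simp only [cn, if_neg hne, if_pos hTT]
  set B := (⌈SH m g r s X zs / g zs⌉₊ : ℝ) * g zs with hB
  set Sgt := ∑ z ∈ (TIcc m g r zs).filter (fun z => i < z), SH m g r s X z with hSgtd
  set Sge := ∑ z ∈ (TIcc m g r zs).filter (fun z => i ≤ z), SH m g r s X z with hSged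
  -- hdec : Sge = SH i + Sgt
  split_ifs with h1 h2
  · obtain ⟨h1a, h1b⟩ := h1
    rw [max_eq_right (by linarith : (0:ℝ) ≤ B - Sgt),
      min_eq_right (by rw [hdec] at h1b; linarith : B - Sgt ≤ SH m g r s X i), hdec]
    field_simp
    ring
  · rw [max_eq_left (by linarith : B - Sgt ≤ 0), min_eq_right hSH]
    field_simp
    ring
  · push_neg at h1
    have h2' : Sgt ≤ B := not_lt.mp h2
    have h3 : Sge ≤ B := h1 h2'
    rw [hdec] at h3
    rw [max_eq_right (by linarith : (0:ℝ) ≤ B - Sgt),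
      min_eq_left (by linarith : SH m g r s X i ≤ B - Sgt)]
    ring

end AuxLemmas


/-- For every `z* ∈ P(k0)` and all `z0, z1 ∈ T(z*)` with
`z0 ≤ z1`:
`|∑_{z ∈ T(z*), z0 ≤ z ≤ z1} (S(H_z)·r z/g z − cn_{z*}(z)·r z)| < r z*`. -/
theorem statement_8 {ι : Type*} (m : ℕ) (g r : ℕ → ℝ) (s : ι → ℝ) (𝒥 : Finset ι)
    (hm : 1 ≤ m)
    (hg1 : 0 < g 1) (hr1 : 0 < r 1)
    (hg : ∀ i j, 1 ≤ i → i < j → j ≤ m → g i < g j)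
    (hr : ∀ i j, 1 ≤ i → i < j → j ≤ m → r i < r j)
    (hJ : 𝒥.Nonempty)
    (hs : ∀ J ∈ 𝒥, 0 < s J ∧ s J ≤ g m) :
    ∀ zs ∈ P m g r (k0f m g s 𝒥),
      ∀ z0 ∈ T m g r zs, ∀ z1 ∈ T m g r zs, z0 ≤ z1 →
        |∑ z ∈ (TIcc m g r zs).filter (fun z => z0 ≤ z ∧ z ≤ z1),
            (SH m g r s 𝒥 z * (r z / g z) - cn m g r s 𝒥 zs z * r z)|
          < r zs := by
  classical
  intro zs hzs z0 hz0 z1 hz1 h01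
  have hgpos : ∀ z, 1 ≤ z → z ≤ m → 0 < g z := by
    intro z h1 h2
    rcases eq_or_lt_of_le h1 with h | h
    · rw [← h]; exact hg1
    · exact hg1.trans (hg 1 z le_rfl h h2)
  have hrpos : ∀ z, 1 ≤ z → z ≤ m → 0 < r z := by
    intro z h1 h2
    rcases eq_or_lt_of_le h1 with h | h
    · rw [← h]; exact hr1
    · exact hr1.trans (hr 1 z le_rfl h h2)
  obtain ⟨J0, hJ0⟩ := hJ
  have hmty : ∀ J ∈ 𝒥, 1 ≤ mty m g s J ∧ mty m g s J ≤ m := by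
    intro J hJm
    have hne : {z | 1 ≤ z ∧ z ≤ m ∧ s J ≤ g z}.Nonempty := ⟨m, hm, le_rfl, (hs J hJm).2⟩
    have h := Nat.sInf_mem hne
    exact ⟨h.1, h.2.1⟩
  have hk0m : k0f m g s 𝒥 ≤ m := Finset.sup_le fun J hJm => (hmty J hJm).2
  have hk01 : 1 ≤ k0f m g s 𝒥 := le_trans (hmty J0 hJ0).1 (Finset.le_sup hJ0)
  have hzsm : zs ≤ m := P_le_m hk0m hzs
  have hzs1 : 1 ≤ zs := hk01.trans (P_ge hzs)
  have hgzs : 0 < g zs := hgpos zs hzs1 hzsm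
  have hrzs : 0 < r zs := hrpos zs hzs1 hzsm
  have hρzs : 0 < r zs / g zs := div_pos hrzs hgzs
  have hTmem : ∀ z ∈ TIcc m g r zs, 1 ≤ z ∧ z ≤ m ∧ z ∈ T m g r zs := by
    intro z hz
    obtain ⟨hin, hT⟩ := Finset.mem_filter.mp hz
    rcases Finset.mem_insert.mp hin with rfl | hic
    · exact ⟨hzs1, hzsm, hT⟩
    · obtain ⟨h1, h2⟩ := Finset.mem_Icc.mp hic
      exact ⟨h1, h2, hT⟩
  have hzsTT : zs ∈ TIcc m g r zs :=
    Finset.mem_filter.mpr ⟨Finset.mem_insert_self _ _, Set.mem_union_left _ rfl⟩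
  have hSH0 : ∀ z, 0 ≤ SH m g r s 𝒥 z := by
    intro z
    simp only [SH, Ssum, H]
    apply Finset.sum_nonneg
    intro J hJm
    exact (hs J (Finset.mem_of_mem_filter J hJm)).1.le
  have hzero : ∀ z ∈ TIcc m g r zs, zs < z → SH m g r s 𝒥 z = 0 := by
    intro z hzTT hgt
    have hzT : z ∈ T m g r zs := (hTmem z hzTT).2.2
    have hHe : H m g r s z 𝒥 = ∅ := by
      rw [H, Finset.eq_empty_iff_forall_notMem]
      intro J hJH
      obtain ⟨hJm, hA⟩ := Finset.mem_filter.mp hJH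
      simp only [A, Set.mem_setOf_eq] at hA
      obtain ⟨hw1, hwm, hwP⟩ := hA
      have hwk0 : mty m g s J ≤ k0f m g s 𝒥 := Finset.le_sup hJm
      have hwzs : mty m g s J ≤ zs := hwk0.trans (P_ge hzs)
      have hzP : z ∈ P m g r zs :=
        ascend_aux (zs - mty m g s J) (mty m g s J) z zs hw1 hwzs hzsm hgt hwP le_rfl
      exact not_mem_T_gt hzsm hzT hgt hzP
    rw [SH, hHe]
    simp [Ssum]
  have hBge : SH m g r s 𝒥 zs ≤ (⌈SH m g r s 𝒥 zs / g zs⌉₊ : ℝ) * g zs := by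
    have h1 : SH m g r s 𝒥 zs / g zs ≤ (⌈SH m g r s 𝒥 zs / g zs⌉₊ : ℝ) := Nat.le_ceil _
    have h2 := mul_le_mul_of_nonneg_right h1 hgzs.le
    rwa [div_mul_cancel₀ _ hgzs.ne'] at h2
  have hBlt : (⌈SH m g r s 𝒥 zs / g zs⌉₊ : ℝ) * g zs < SH m g r s 𝒥 zs + g zs := by
    have h1 : (⌈SH m g r s 𝒥 zs / g zs⌉₊ : ℝ) < SH m g r s 𝒥 zs / g zs + 1 :=
      Nat.ceil_lt_add_one (div_nonneg (hSH0 zs) hgzs.le)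
    have h2 := mul_lt_mul_of_pos_right h1 hgzs
    rwa [add_mul, div_mul_cancel₀ _ hgzs.ne', one_mul] at h2
  have hB0 : 0 ≤ (⌈SH m g r s 𝒥 zs / g zs⌉₊ : ℝ) * g zs := (hSH0 zs).trans hBge
  set B := (⌈SH m g r s 𝒥 zs / g zs⌉₊ : ℝ) * g zs with hBdef
  set mt : ℕ → ℝ := fun z => min (SH m g r s 𝒥 z)
    (max 0 (B - ∑ w ∈ (TIcc m g r zs).filter (fun w => z < w), SH m g r s 𝒥 w)) with hmt
  have hmt0 : ∀ z, 0 ≤ mt z := fun z => le_min (hSH0 z) (le_max_left _ _)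
  have hterm : ∀ z ∈ TIcc m g r zs,
      SH m g r s 𝒥 z * (r z / g z) - cn m g r s 𝒥 zs z * r z
        = if z = zs then (SH m g r s 𝒥 zs - B) * (r zs / g zs) else mt z * (r z / g z) := by
    intro z hz
    obtain ⟨hz1, hzm2, hzT⟩ := hTmem z hz
    by_cases hcase : z = zs
    · rw [hcase, if_pos rfl]
      have hcn : cn m g r s 𝒥 zs zs = (⌈SH m g r s 𝒥 zs / g zs⌉₊ : ℝ) := by
        simp [cn]
      rw [hcn, hBdef]
      field_simp
    · rw [if_neg hcase]
      simp only [hmt]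
      rw [hBdef]
      exact term_formula s 𝒥 hzT hcase (hgpos z hz1 hzm2).ne' (hSH0 z) hz
  set L := (TIcc m g r zs).filter (fun z => z0 ≤ z ∧ z ≤ z1) with hLdef
  have hLsub : L ⊆ TIcc m g r zs := Finset.filter_subset _ _
  rw [Finset.sum_congr rfl (fun z hz => hterm z (hLsub hz))]
  have hρnn : ∀ z ∈ TIcc m g r zs, 0 ≤ r z / g z := by
    intro z hz
    obtain ⟨h1, h2, _⟩ := hTmem z hz
    exact (div_pos (hrpos z h1 h2) (hgpos z h1 h2)).le
  have hkey : (B - SH m g r s 𝒥 zs) * (r zs / g zs) < r zs := by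
    have h2 : (B - SH m g r s 𝒥 zs) * (r zs / g zs) < g zs * (r zs / g zs) :=
      mul_lt_mul_of_pos_right (by linarith) hρzs
    have h3 : g zs * (r zs / g zs) = r zs := by field_simp
    rwa [h3] at h2
  rw [abs_lt]
  constructor
  · have hge : ∑ z ∈ L, (if z = zs then (SH m g r s 𝒥 zs - B) * (r zs / g zs) else 0)
        ≤ ∑ z ∈ L, (if z = zs then (SH m g r s 𝒥 zs - B) * (r zs / g zs)
            else mt z * (r z / g z)) := by
      apply Finset.sum_le_sum
      intro z hz
      by_cases h : z = zs
      · rw [if_pos h, if_pos h]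
      · rw [if_neg h, if_neg h]
        exact mul_nonneg (hmt0 z) (hρnn z (hLsub hz))
    have hval : ∑ z ∈ L, (if z = zs then (SH m g r s 𝒥 zs - B) * (r zs / g zs) else 0)
        = if zs ∈ L then (SH m g r s 𝒥 zs - B) * (r zs / g zs) else 0 :=
      Finset.sum_ite_eq' L zs (fun _ => (SH m g r s 𝒥 zs - B) * (r zs / g zs))
    have hsymm : (SH m g r s 𝒥 zs - B) * (r zs / g zs)
        = -((B - SH m g r s 𝒥 zs) * (r zs / g zs)) := by ring
    have hlow : -r zs < if zs ∈ L then (SH m g r s 𝒥 zs - B) * (r zs / g zs) else 0 := by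
      split_ifs
      · linarith [hkey, hsymm]
      · linarith
    linarith [hge, hval, hlow]
  · have h1 : ∑ z ∈ L, (if z = zs then (SH m g r s 𝒥 zs - B) * (r zs / g zs)
          else mt z * (r z / g z))
        ≤ ∑ z ∈ L, (if z = zs then 0 else mt z * (r zs / g zs)) := by
      apply Finset.sum_le_sum
      intro z hz
      obtain ⟨hz1, hzm2, hzT⟩ := hTmem z (hLsub hz)
      by_cases h : z = zs
      · rw [if_pos h, if_pos h]
        exact mul_nonpos_of_nonpos_of_nonneg (by linarith [hBge]) hρzs.le
      · rw [if_neg h, if_neg h]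
        exact mul_le_mul_of_nonneg_left (rho_le_of_mem_T hzsm hzT) (hmt0 z)
    have h2 : ∑ z ∈ L, (if z = zs then 0 else mt z * (r zs / g zs))
        ≤ ∑ z ∈ TIcc m g r zs, (if z = zs then 0 else mt z * (r zs / g zs)) := by
      apply Finset.sum_le_sum_of_subset_of_nonneg hLsub
      intro z hz _
      split_ifs with h
      · exact le_rfl
      · exact mul_nonneg (hmt0 z) hρzs.le
    have h3 : ∑ z ∈ TIcc m g r zs, (if z = zs then 0 else mt z * (r zs / g zs))
        = (∑ z ∈ TIcc m g r zs, mt z - mt zs) * (r zs / g zs) := by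
      have e : ∀ z ∈ TIcc m g r zs, (if z = zs then 0 else mt z * (r zs / g zs))
          = mt z * (r zs / g zs) - (if z = zs then mt z * (r zs / g zs) else 0) := by
        intro z _
        split_ifs <;> ring
      rw [Finset.sum_congr rfl e, Finset.sum_sub_distrib,
        Finset.sum_ite_eq' (TIcc m g r zs) zs (fun z => mt z * (r zs / g zs)), if_pos hzsTT,
        ← Finset.sum_mul]
      ring
    have hSgt_zs : ∑ w ∈ (TIcc m g r zs).filter (fun w => zs < w), SH m g r s 𝒥 w = 0 := by
      apply Finset.sum_eq_zero
      intro z hz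
      obtain ⟨hzi, hlt⟩ := Finset.mem_filter.mp hz
      exact hzero z hzi hlt
    have hmtzs : mt zs = SH m g r s 𝒥 zs := by
      simp only [hmt]
      rw [hSgt_zs, sub_zero, max_eq_right hB0, min_eq_left hBge]
    have h4 : ∑ z ∈ TIcc m g r zs, mt z
        = min B (∑ z ∈ TIcc m g r zs, SH m g r s 𝒥 z) - min B 0 := by
      have e : ∀ z ∈ TIcc m g r zs, mt z
          = min B (∑ w ∈ (TIcc m g r zs).filter (fun w => z ≤ w), SH m g r s 𝒥 w)
            - min B (∑ w ∈ (TIcc m g r zs).filter (fun w => z < w), SH m g r s 𝒥 w) := by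
        intro z hz
        have hdec := sge_decomp (fun w => SH m g r s 𝒥 w) hz
        simp only [hmt]
        rw [min_decomp' (hSH0 z), ← hdec]
      rw [Finset.sum_congr rfl e]
      exact telescope_min (fun x => min B x) (fun w => SH m g r s 𝒥 w) (TIcc m g r zs)
    have h5 : min B (0:ℝ) = 0 := min_eq_right hB0
    have h6 : min B (∑ z ∈ TIcc m g r zs, SH m g r s 𝒥 z) ≤ B := min_le_left _ _
    have h7 : (∑ z ∈ TIcc m g r zs, mt z - mt zs) * (r zs / g zs)
        ≤ (B - SH m g r s 𝒥 zs) * (r zs / g zs) := by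
      apply mul_le_mul_of_nonneg_right _ hρzs.le
      rw [h4, hmtzs, h5]
      linarith [h6]
    linarith [h1, h2, h3, h7, hkey]


end BSHM
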